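/- Let A ∈ ℤ^{m×n} be an integer matrix, let Δ be an upper bound on the absolute value of each entry of A, and let y ∈ ℤ^n be an element of the Graver basis of A. Then ‖y‖₁ ≤ (2mΔ + 1)^m. -/

import Mathlib

open Finset


/-- Two integer vectors are sign-compatible if they agree in sign componentwise. -/
def SignCompat {ι : Type*} (u v : ι → ℤ) : Prop := ∀ i, 0 ≤ u i * v i

/-- A cycle of an integer matrix `A` is an integer vector in its kernel. -/
def IsCycle {R C : Type*} [Fintype C] (A : Matrix R C ℤ) (y : C → ℤ) : Prop :=
  A.mulVec y = 0

/-- The Graver basis of `A` consists of the nonzero cycles of `A` that cannot be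
written as the sum of two sign-compatible nonzero cycles of `A`. -/
def InGraverBasis {R C : Type*} [Fintype C] (A : Matrix R C ℤ) (y : C → ℤ) : Prop :=
  IsCycle A y ∧ y ≠ 0 ∧
    ¬ ∃ u v : C → ℤ, IsCycle A u ∧ IsCycle A v ∧ u ≠ 0 ∧ v ≠ 0 ∧
      SignCompat u v ∧ y = u + v


section SteinitzAux


private lemma reduce_frac {m : ℕ} {α : Type*} [DecidableEq α]
    (v : α → Fin m → ℚ) (A : Finset α) (c : ℚ) :
    ∀ (k : ℕ) (lam : α → ℚ), (A.filter (fun a => lam a ≠ 0 ∧ lam a ≠ 1)).card ≤ k →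
    (∀ a ∉ A, lam a = 0) → (∀ a, 0 ≤ lam a) → (∀ a, lam a ≤ 1) →
    (∑ a ∈ A, lam a = c) → (∑ a ∈ A, lam a • v a = 0) →
    ∃ lam' : α → ℚ, (∀ a ∉ A, lam' a = 0) ∧ (∀ a, 0 ≤ lam' a) ∧ (∀ a, lam' a ≤ 1) ∧
      (∑ a ∈ A, lam' a = c) ∧ (∑ a ∈ A, lam' a • v a = 0) ∧
      (A.filter (fun a => lam' a ≠ 0 ∧ lam' a ≠ 1)).card ≤ m + 1 := by
  intro k
  induction k with
  | zero =>
    intro lam hcard hsupp h0 h1 hsum hv0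
    exact ⟨lam, hsupp, h0, h1, hsum, hv0, le_trans hcard (Nat.zero_le _)⟩
  | succ k ih =>
    intro lam hcard hsupp h0 h1 hsum hv0
    by_cases hsmall : (A.filter (fun a => lam a ≠ 0 ∧ lam a ≠ 1)).card ≤ m + 1
    · exact ⟨lam, hsupp, h0, h1, hsum, hv0, hsmall⟩
    push_neg at hsmall
    set F : Finset α := A.filter (fun a => lam a ≠ 0 ∧ lam a ≠ 1) with hF
    have hFA : F ⊆ A := Finset.filter_subset _ _
    -- the family (1, v a) over F is linearly dependent
    have hdep : ¬ LinearIndependent ℚ (fun a : F => (Fin.cons 1 (v a) : Fin (m+1) → ℚ)) := by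
      intro hli
      have := hli.fintype_card_le_finrank
      rw [Module.finrank_pi, Fintype.card_fin, Fintype.card_coe] at this
      omega
    rw [Fintype.not_linearIndependent_iff] at hdep
    obtain ⟨g, hg0, a₀', hg⟩ := hdep
    classical
    set mu : α → ℚ := fun a => if h : a ∈ F then g ⟨a, h⟩ else 0 with hmu
    have hmusupp : ∀ a ∉ F, mu a = 0 := fun a ha => dif_neg ha
    have hmusum : ∑ a ∈ F, mu a • (Fin.cons 1 (v a) : Fin (m+1) → ℚ) = 0 := by
      rw [← Finset.sum_attach F (fun a => mu a • (Fin.cons 1 (v a) : Fin (m+1) → ℚ))]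
      rw [← hg0]
      refine Finset.sum_congr rfl fun a _ => ?_
      simp [hmu]
    have hmu1 : ∑ a ∈ F, mu a = 0 := by
      have := congrFun hmusum 0
      simpa [Finset.sum_apply] using this
    have hmuv : ∑ a ∈ F, mu a • v a = 0 := by
      funext i
      have := congrFun hmusum i.succ
      simpa [Finset.sum_apply] using this
    -- pick the blocking coordinate
    set D : Finset α := F.filter (fun a => mu a ≠ 0) with hD
    have hDne : D.Nonempty := ⟨a₀', by
      simp only [hD, Finset.mem_filter]
      exact ⟨a₀'.2, by simpa [hmu, dif_pos a₀'.2] using hg⟩⟩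
    set bnd : α → ℚ := fun a => if 0 < mu a then (1 - lam a) / mu a else lam a / (-(mu a)) with hbnd
    obtain ⟨a₀, ha₀D, hmin⟩ := Finset.exists_min_image D bnd hDne
    set t : ℚ := bnd a₀ with ht
    have hbnd_nonneg : ∀ a ∈ D, 0 ≤ bnd a := by
      intro a haD
      have hmua : mu a ≠ 0 := (Finset.mem_filter.mp haD).2
      by_cases h : 0 < mu a
      · simp only [hbnd, if_pos h]
        exact div_nonneg (by linarith [h1 a]) h.le
      · simp only [hbnd, if_neg h]
        have : 0 < -(mu a) := by
          rcases lt_trichotomy (mu a) 0 with h'|h'|h' <;> first | linarith | exact absurd h' hmua | exact absurd h' h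
        exact div_nonneg (h0 a) this.le
    have ht0 : 0 ≤ t := hbnd_nonneg a₀ ha₀D
    set lam' : α → ℚ := fun a => lam a + t * mu a with hlam'
    have hfix : ∀ a ∉ D, lam' a = lam a := by
      intro a haD
      have : mu a = 0 := by
        by_cases hF' : a ∈ F
        · by_contra hne
          exact haD (Finset.mem_filter.mpr ⟨hF', hne⟩)
        · exact hmusupp a hF'
      simp [hlam', this]
    have h0' : ∀ a, 0 ≤ lam' a := by
      intro a
      by_cases haD : a ∈ D
      · have hmua : mu a ≠ 0 := (Finset.mem_filter.mp haD).2
        rcases lt_or_gt_of_ne hmua with hneg | hpos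
        · have htle : t ≤ lam a / (-(mu a)) := by
            have := hmin a haD
            simpa [hbnd, not_lt.mpr hneg.le, if_neg (by linarith : ¬ 0 < mu a)] using this
          have : t * (-(mu a)) ≤ lam a := by
            rw [← le_div_iff₀ (by linarith : (0:ℚ) < -(mu a))]
            exact htle
          simp only [hlam']; linarith
        · have : 0 ≤ t * mu a := mul_nonneg ht0 hpos.le
          simp only [hlam']; linarith [h0 a]
      · rw [hfix a haD]; exact h0 a
    have h1' : ∀ a, lam' a ≤ 1 := by
      intro a
      by_cases haD : a ∈ D
      · have hmua : mu a ≠ 0 := (Finset.mem_filter.mp haD).2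
        rcases lt_or_gt_of_ne hmua with hneg | hpos
        · have : t * mu a ≤ 0 := mul_nonpos_of_nonneg_of_nonpos ht0 hneg.le
          simp only [hlam']; linarith [h1 a]
        · have htle : t ≤ (1 - lam a) / mu a := by
            have := hmin a haD
            simpa [hbnd, if_pos hpos] using this
          have : t * mu a ≤ 1 - lam a := by
            rw [← le_div_iff₀ hpos]; exact htle
          simp only [hlam']; linarith
      · rw [hfix a haD]; exact h1 a
    have hsupp' : ∀ a ∉ A, lam' a = 0 := by
      intro a ha
      have haF : a ∉ F := fun h => ha (hFA h)
      have haD : a ∉ D := fun h => haF (Finset.mem_filter.mp h).1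
      rw [hfix a haD]; exact hsupp a ha
    have hmusuppA : ∑ a ∈ A, mu a = 0 := by
      rw [← Finset.sum_subset hFA (fun a _ ha => hmusupp a ha)]; exact hmu1
    have hmuvA : ∑ a ∈ A, mu a • v a = 0 := by
      rw [← Finset.sum_subset hFA (fun a _ ha => by rw [hmusupp a ha, zero_smul])]; exact hmuv
    have hsum' : ∑ a ∈ A, lam' a = c := by
      simp only [hlam']
      rw [Finset.sum_add_distrib, hsum, ← Finset.mul_sum, hmusuppA, mul_zero, add_zero]
    have hv0' : ∑ a ∈ A, lam' a • v a = 0 := by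
      simp only [hlam', add_smul]
      rw [Finset.sum_add_distrib, hv0]
      have : ∑ a ∈ A, (t * mu a) • v a = t • ∑ a ∈ A, mu a • v a := by
        rw [Finset.smul_sum]
        exact Finset.sum_congr rfl fun a _ => (smul_smul t (mu a) (v a)).symm
      rw [this, hmuvA, smul_zero, add_zero]
    -- lam' a₀ ∈ {0,1}
    have ha₀F : a₀ ∈ F := (Finset.mem_filter.mp ha₀D).1
    have hmua₀ : mu a₀ ≠ 0 := (Finset.mem_filter.mp ha₀D).2
    have ha₀01 : lam' a₀ = 0 ∨ lam' a₀ = 1 := by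
      rcases lt_or_gt_of_ne hmua₀ with hneg | hpos
      · left
        have : t = lam a₀ / (-(mu a₀)) := by
          simp [ht, hbnd, if_neg (by linarith : ¬ 0 < mu a₀)]
        have hne : -(mu a₀) ≠ 0 := neg_ne_zero.mpr hmua₀
        have hx : lam a₀ / (-(mu a₀)) * mu a₀ = -lam a₀ := by
          field_simp
        simp only [hlam', this]
        rw [hx]; ring
      · right
        have : t = (1 - lam a₀) / mu a₀ := by simp [ht, hbnd, if_pos hpos]
        have hx : (1 - lam a₀) / mu a₀ * mu a₀ = 1 - lam a₀ := by
          field_simp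
        simp only [hlam', this]
        rw [hx]; ring
    -- new fractional set shrinks
    have hsubset : A.filter (fun a => lam' a ≠ 0 ∧ lam' a ≠ 1) ⊆ F.erase a₀ := by
      intro a ha
      rw [Finset.mem_filter] at ha
      obtain ⟨haA, ha0, ha1⟩ := ha
      rw [Finset.mem_erase]
      constructor
      · rintro rfl
        rcases ha₀01 with h | h
        · exact ha0 h
        · exact ha1 h
      · by_contra haF
        have haD : a ∉ D := fun h => haF (Finset.mem_filter.mp h).1
        rw [hfix a haD] at ha0 ha1
        have : a ∈ F := Finset.mem_filter.mpr ⟨haA, ha0, ha1⟩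
        exact haF this
    have hcard' : (A.filter (fun a => lam' a ≠ 0 ∧ lam' a ≠ 1)).card ≤ k := by
      calc (A.filter (fun a => lam' a ≠ 0 ∧ lam' a ≠ 1)).card
          ≤ (F.erase a₀).card := Finset.card_le_card hsubset
        _ = F.card - 1 := Finset.card_erase_of_mem ha₀F
        _ ≤ k := by omega
    exact ih lam' hcard' hsupp' h0' h1' hsum' hv0'

private lemma steinitz_aux {m : ℕ} {α : Type*} [DecidableEq α]
    (v : α → Fin m → ℚ) (Δ : ℚ) (hΔ : 0 ≤ Δ) (hv : ∀ a i, |v a i| ≤ Δ) :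
    ∀ (k : ℕ) (A : Finset α), A.card = k →
    ∀ lam : α → ℚ, (∀ a ∉ A, lam a = 0) → (∀ a, 0 ≤ lam a) → (∀ a, lam a ≤ 1) →
    (∑ a ∈ A, lam a = (k : ℚ) - m) → (∑ a ∈ A, lam a • v a = 0) →
    ∃ f : Fin k → α, Function.Injective f ∧ (∀ j, f j ∈ A) ∧
      ∀ (t : ℕ) (i : Fin m),
        |∑ j ∈ Finset.univ.filter (fun j : Fin k => (j : ℕ) < t), v (f j) i| ≤ (m : ℚ) * Δ := by
  intro k
  induction k using Nat.strong_induction_on with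
  | _ k ih =>
  intro A hA lam hsupp h0 h1 hsum hv0
  by_cases hkm : k ≤ m
  · -- trivial ordering
    set f : Fin k → α := fun j => (A.equivFin.symm (Fin.cast hA.symm j) : α) with hf
    refine ⟨f, ?_, fun j => (A.equivFin.symm (Fin.cast hA.symm j)).2, ?_⟩
    · intro j₁ j₂ h
      have h2 := A.equivFin.symm.injective (Subtype.ext h)
      have h3 := congrArg Fin.val h2
      exact Fin.ext h3
    · intro t i
      calc |∑ j ∈ Finset.univ.filter (fun j : Fin k => (j : ℕ) < t), v (f j) i|
          ≤ ∑ j ∈ Finset.univ.filter (fun j : Fin k => (j : ℕ) < t), |v (f j) i| :=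
            Finset.abs_sum_le_sum_abs _ _
        _ ≤ ∑ _j ∈ Finset.univ.filter (fun j : Fin k => (j : ℕ) < t), Δ :=
            Finset.sum_le_sum fun j _ => hv (f j) i
        _ = (Finset.univ.filter (fun j : Fin k => (j : ℕ) < t)).card * Δ := by
            rw [Finset.sum_const, nsmul_eq_mul]
        _ ≤ (m : ℚ) * Δ := by
            apply mul_le_mul_of_nonneg_right _ hΔ
            have hle : (Finset.univ.filter (fun j : Fin k => (j : ℕ) < t)).card ≤ m := by
              calc (Finset.univ.filter (fun j : Fin k => (j : ℕ) < t)).card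
                  ≤ (Finset.univ : Finset (Fin k)).card :=
                    Finset.card_le_card (Finset.filter_subset _ _)
                _ = k := by simp
                _ ≤ m := hkm
            exact_mod_cast hle
  · -- main induction step
    push_neg at hkm
    obtain ⟨k', rfl⟩ : ∃ k', k = k' + 1 := ⟨k - 1, by omega⟩
    have hkQ : (m:ℚ) + 1 ≤ (k' + 1 : ℕ) := by exact_mod_cast hkm
    have hkm' : (0:ℚ) < ((k' + 1 : ℕ):ℚ) - m := by linarith
    set s : ℚ := (((k' + 1 : ℕ):ℚ) - 1 - m) / (((k' + 1 : ℕ):ℚ) - m) with hs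
    have hs0 : 0 ≤ s := div_nonneg (by linarith) hkm'.le
    have hs1 : s ≤ 1 := by rw [div_le_one hkm']; linarith
    set lam₀ : α → ℚ := fun a => s * lam a with hlam₀
    have hsupp₀ : ∀ a ∉ A, lam₀ a = 0 := fun a ha => by simp [hlam₀, hsupp a ha]
    have h00 : ∀ a, 0 ≤ lam₀ a := fun a => mul_nonneg hs0 (h0 a)
    have h10 : ∀ a, lam₀ a ≤ 1 := fun a => le_trans (mul_le_of_le_one_right hs0 (h1 a)) hs1
    have hsum₀ : ∑ a ∈ A, lam₀ a = ((k' + 1 : ℕ):ℚ) - 1 - m := by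
      simp only [hlam₀]
      rw [← Finset.mul_sum, hsum, hs, div_mul_cancel₀ _ (ne_of_gt hkm')]
    have hv0₀ : ∑ a ∈ A, lam₀ a • v a = 0 := by
      simp only [hlam₀]
      have hh : ∑ a ∈ A, (s * lam a) • v a = s • ∑ a ∈ A, lam a • v a := by
        rw [Finset.smul_sum]
        exact Finset.sum_congr rfl fun a _ => (smul_smul s (lam a) (v a)).symm
      rw [hh, hv0, smul_zero]
    obtain ⟨lam', hsupp', h0', h1', hsum', hv0', hcard'⟩ :=
      reduce_frac v A (((k' + 1 : ℕ):ℚ) - 1 - m)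
        (A.filter (fun a => lam₀ a ≠ 0 ∧ lam₀ a ≠ 1)).card lam₀
        le_rfl hsupp₀ h00 h10 hsum₀ hv0₀
    -- find a zero coordinate of lam'
    have hzero : ∃ a ∈ A, lam' a = 0 := by
      by_contra hno
      push_neg at hno
      set O := A.filter (fun a => lam' a = 1) with hOdef
      set F' := A.filter (fun a => ¬ lam' a = 1) with hF'def
      have hsplit : ∑ a ∈ O, lam' a + ∑ a ∈ F', lam' a = ((k' + 1 : ℕ):ℚ) - 1 - m := by
        rw [Finset.sum_filter_add_sum_filter_not A _ lam']
        exact hsum'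
      have hO1 : ∑ a ∈ O, lam' a = (O.card : ℚ) := by
        rw [Finset.sum_congr rfl (fun a ha => (Finset.mem_filter.mp ha).2)]
        simp [hOdef]
      have hcards : O.card + F'.card = k' + 1 := by
        rw [hOdef, hF'def, Finset.card_filter_add_card_filter_not, hA]
      have hF'F : F' = A.filter (fun a => lam' a ≠ 0 ∧ lam' a ≠ 1) := by
        ext a
        simp only [hF'def, Finset.mem_filter]
        exact ⟨fun ⟨ha, h⟩ => ⟨ha, hno a ha, h⟩, fun ⟨ha, _, h⟩ => ⟨ha, h⟩⟩
      have hF'card : F'.card ≤ m + 1 := by rw [hF'F]; exact hcard'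
      rcases Finset.eq_empty_or_nonempty F' with hemp | hne
      · rw [hemp] at hsplit hcards
        simp at hsplit hcards
        rw [hO1] at hsplit
        rw [hcards] at hsplit
        push_cast at hsplit
        linarith
      · have hpos : 0 < ∑ a ∈ F', lam' a := by
          apply Finset.sum_pos _ hne
          intro a ha
          have haA : a ∈ A := (Finset.mem_filter.mp ha).1
          exact lt_of_le_of_ne (h0' a) (Ne.symm (hno a haA))
        have hOk : (k' + 1 : ℕ) ≤ O.card + (m + 1) := by omega
        have hOkQ : ((k' + 1 : ℕ):ℚ) - 1 - m ≤ (O.card : ℚ) := by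
          have : ((k' + 1 : ℕ):ℚ) ≤ (O.card : ℚ) + (m + 1) := by exact_mod_cast hOk
          linarith
        rw [hO1] at hsplit
        linarith
    obtain ⟨a₀, ha₀A, ha₀0⟩ := hzero
    set A' := A.erase a₀ with hA'
    have hA'card : A'.card = k' := by rw [hA', Finset.card_erase_of_mem ha₀A, hA]; omega
    have hsupp'' : ∀ a ∉ A', lam' a = 0 := by
      intro a ha
      by_cases haA : a ∈ A
      · have : a = a₀ := by
          by_contra hne
          exact ha (Finset.mem_erase.mpr ⟨hne, haA⟩)
        rw [this]; exact ha₀0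
      · exact hsupp' a haA
    have hsumA' : ∑ a ∈ A', lam' a = (k' : ℚ) - m := by
      rw [hA', Finset.sum_erase_eq_sub ha₀A, ha₀0, hsum']
      push_cast; ring
    have hv0A' : ∑ a ∈ A', lam' a • v a = 0 := by
      rw [hA', Finset.sum_erase_eq_sub ha₀A, ha₀0, hv0', zero_smul, sub_zero]
    obtain ⟨f', hinj', hmem', hpre'⟩ :=
      ih k' (by omega) A' hA'card lam' hsupp'' h0' h1' hsumA' hv0A'
    set f : Fin (k' + 1) → α := Fin.snoc f' a₀ with hfdef
    have hrange : ∀ j : Fin k', f' j ≠ a₀ := fun j => (Finset.mem_erase.mp (hmem' j)).1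
    have hmem : ∀ j, f j ∈ A := by
      intro j
      rcases Fin.eq_castSucc_or_eq_last j with ⟨j', rfl⟩ | rfl
      · rw [hfdef]; simp only [Fin.snoc_castSucc]
        exact Finset.mem_of_mem_erase (hmem' j')
      · rw [hfdef]; simp only [Fin.snoc_last]; exact ha₀A
    have hinj : Function.Injective f := by
      intro j₁ j₂ h
      rcases Fin.eq_castSucc_or_eq_last j₁ with ⟨j₁', rfl⟩ | rfl <;>
        rcases Fin.eq_castSucc_or_eq_last j₂ with ⟨j₂', rfl⟩ | rfl
      · simp only [hfdef, Fin.snoc_castSucc] at h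
        exact congrArg _ (hinj' h)
      · simp only [hfdef, Fin.snoc_castSucc, Fin.snoc_last] at h
        exact absurd h (hrange j₁')
      · simp only [hfdef, Fin.snoc_castSucc, Fin.snoc_last] at h
        exact absurd h.symm (hrange j₂')
      · rfl
    refine ⟨f, hinj, hmem, ?_⟩
    intro t i
    by_cases ht : t ≤ k'
    · have heq : ∑ j ∈ Finset.univ.filter (fun j : Fin (k'+1) => (j : ℕ) < t), v (f j) i
          = ∑ j ∈ Finset.univ.filter (fun j : Fin k' => (j : ℕ) < t), v (f' j) i := by
        rw [Finset.sum_filter, Finset.sum_filter, Fin.sum_univ_castSucc]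
        have hlast : ¬ ((Fin.last k' : Fin (k'+1)) : ℕ) < t := by
          simp only [Fin.val_last]; omega
        rw [if_neg hlast, add_zero]
        refine Finset.sum_congr rfl fun j _ => ?_
        simp only [hfdef, Fin.snoc_castSucc, Fin.coe_castSucc]
      rw [heq]; exact hpre' t i
    · have huniv : Finset.univ.filter (fun j : Fin (k'+1) => (j : ℕ) < t) = Finset.univ := by
        apply Finset.filter_true_of_mem
        intro j _
        have := j.isLt; omega
      rw [huniv]
      have himg : Finset.image f Finset.univ = A := by
        apply Finset.eq_of_subset_of_card_le
        · intro a ha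
          obtain ⟨j, _, rfl⟩ := Finset.mem_image.mp ha
          exact hmem j
        · rw [Finset.card_image_of_injective _ hinj, Finset.card_univ, Fintype.card_fin, hA]
      have hAs : ∑ j ∈ (Finset.univ : Finset (Fin (k'+1))), v (f j) i = ∑ a ∈ A, v a i := by
        rw [← himg, Finset.sum_image (fun x _ y _ h => hinj h)]
      rw [hAs]
      have hlv : ∑ a ∈ A, lam a * v a i = 0 := by
        have := congrFun hv0 i
        simpa [Finset.sum_apply] using this
      have hrw : ∑ a ∈ A, v a i = ∑ a ∈ A, (1 - lam a) * v a i := by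
        have : ∑ a ∈ A, (1 - lam a) * v a i = ∑ a ∈ A, v a i - ∑ a ∈ A, lam a * v a i := by
          rw [← Finset.sum_sub_distrib]
          exact Finset.sum_congr rfl fun a _ => by ring
        rw [this, hlv, sub_zero]
      rw [hrw]
      calc |∑ a ∈ A, (1 - lam a) * v a i|
          ≤ ∑ a ∈ A, |(1 - lam a) * v a i| := Finset.abs_sum_le_sum_abs _ _
        _ ≤ ∑ a ∈ A, (1 - lam a) * Δ := by
            apply Finset.sum_le_sum
            intro a _
            rw [abs_mul, abs_of_nonneg (by linarith [h1 a] : (0:ℚ) ≤ 1 - lam a)]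
            exact mul_le_mul_of_nonneg_left (hv a i) (by linarith [h1 a])
        _ = ((A.card : ℚ) - ∑ a ∈ A, lam a) * Δ := by
            rw [← Finset.sum_mul, Finset.sum_sub_distrib, Finset.sum_const, nsmul_eq_mul, mul_one]
        _ = (m : ℚ) * Δ := by
            rw [hsum, hA]; ring_nf

private lemma steinitz {m : ℕ} {α : Type*} [Fintype α] [DecidableEq α]
    (v : α → Fin m → ℚ) (Δ : ℚ) (hΔ : 0 ≤ Δ) (hv : ∀ a i, |v a i| ≤ Δ)
    (hsum : ∑ a, v a = 0) (N : ℕ) (hN : Fintype.card α = N) :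
    ∃ f : Fin N → α, Function.Injective f ∧
      ∀ (t : ℕ) (i : Fin m),
        |∑ j ∈ Finset.univ.filter (fun j : Fin N => (j : ℕ) < t), v (f j) i| ≤ (m : ℚ) * Δ := by
  by_cases hNm : N ≤ m
  · refine ⟨fun j => (Fintype.equivFinOfCardEq hN).symm j, (Fintype.equivFinOfCardEq hN).symm.injective, ?_⟩
    intro t i
    calc |∑ j ∈ Finset.univ.filter (fun j : Fin N => (j : ℕ) < t),
            v ((Fintype.equivFinOfCardEq hN).symm j) i|
        ≤ ∑ j ∈ Finset.univ.filter (fun j : Fin N => (j : ℕ) < t),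
            |v ((Fintype.equivFinOfCardEq hN).symm j) i| := Finset.abs_sum_le_sum_abs _ _
      _ ≤ ∑ _j ∈ Finset.univ.filter (fun j : Fin N => (j : ℕ) < t), Δ :=
          Finset.sum_le_sum fun j _ => hv _ i
      _ = (Finset.univ.filter (fun j : Fin N => (j : ℕ) < t)).card * Δ := by
          rw [Finset.sum_const, nsmul_eq_mul]
      _ ≤ (m : ℚ) * Δ := by
          apply mul_le_mul_of_nonneg_right _ hΔ
          have hle : (Finset.univ.filter (fun j : Fin N => (j : ℕ) < t)).card ≤ m :=
            le_trans (le_trans (Finset.card_le_card (Finset.filter_subset _ _)) (by simp)) hNm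
          exact_mod_cast hle
  · push_neg at hNm
    have hN0 : 0 < N := by omega
    have hNQ : (0:ℚ) < (N:ℚ) := by exact_mod_cast hN0
    have hmN : (m:ℚ) < (N:ℚ) := by exact_mod_cast hNm
    set lam : α → ℚ := fun _ => ((N:ℚ) - m) / N with hlam
    have hcardA : (Finset.univ : Finset α).card = N := by rw [Finset.card_univ, hN]
    obtain ⟨f, hinj, _, hpre⟩ :=
      steinitz_aux v Δ hΔ hv N Finset.univ hcardA lam
        (fun a ha => absurd (Finset.mem_univ a) ha)
        (fun a => div_nonneg (by linarith) hNQ.le)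
        (fun a => by rw [hlam]; exact (div_le_one hNQ).mpr (by linarith))
        (by rw [Finset.sum_const, hcardA, nsmul_eq_mul, mul_div_cancel₀ _ (ne_of_gt hNQ)])
        (by
          have : ∑ a ∈ Finset.univ, lam a • v a = (((N:ℚ) - m) / N) • ∑ a ∈ Finset.univ, v a := by
            rw [Finset.smul_sum]
          rw [this, hsum, smul_zero])
    exact ⟨f, hinj, hpre⟩

end SteinitzAux

/-- Every element of the Graver basis of an integer matrix `A ∈ ℤ^{m×n}` whose
entries are bounded by `Δ` in absolute value has `ℓ₁`-norm at most `(2mΔ+1)^m`. -/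
theorem graver_l1_bound (m n : ℕ) (A : Matrix (Fin m) (Fin n) ℤ) (Δ : ℤ)
    (hA : ∀ i j, |A i j| ≤ Δ)
    (y : Fin n → ℤ) (hy : InGraverBasis A y) :
    ∑ i, |y i| ≤ (2 * (m : ℤ) * Δ + 1) ^ m := by
  classical
  obtain ⟨hyc, hyne, hind⟩ := hy
  by_contra hbig
  push_neg at hbig
  have hn : n ≠ 0 := by
    rintro rfl
    exact hyne (funext fun i => i.elim0)
  set Δ' : ℤ := max Δ 0 with hΔ'
  have hΔ'0 : (0:ℤ) ≤ Δ' := le_max_right _ _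
  have hA' : ∀ i j, |A i j| ≤ Δ' := fun i j => le_trans (hA i j) (le_max_left _ _)
  have hpow : (2 * (m:ℤ) * Δ' + 1)^m = (2 * (m:ℤ) * Δ + 1)^m := by
    rcases Nat.eq_zero_or_pos m with hm | hm
    · rw [hm]; simp
    · have hΔ0 : (0:ℤ) ≤ Δ :=
        le_trans (abs_nonneg _) (hA ⟨0, hm⟩ ⟨0, Nat.pos_of_ne_zero hn⟩)
      rw [hΔ', max_eq_left hΔ0]
  set N : ℕ := ∑ j, (y j).natAbs with hN
  have hsumy : ∑ i, |y i| = (N : ℤ) := by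
    rw [hN]; push_cast
    rfl
  have hNbig : ((2 * (m:ℤ) * Δ' + 1)^m) < (N:ℤ) := by
    rw [hpow]; rw [hsumy] at hbig; exact hbig
  -- the index type of unit steps
  set T := (j : Fin n) × Fin ((y j).natAbs) with hT
  have hcardT : Fintype.card T = N := by
    show Fintype.card ((j : Fin n) × Fin ((y j).natAbs)) = N
    rw [Fintype.card_sigma]
    exact (Finset.sum_congr rfl fun j _ => Fintype.card_fin _).trans hN.symm
  set step : T → (Fin n → ℤ) := fun p => Pi.single p.1 (Int.sign (y p.1)) with hstep
  have hsignabs : ∀ z : ℤ, |Int.sign z| ≤ 1 := by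
    intro z
    rcases lt_trichotomy z 0 with h | h | h
    · rw [Int.sign_eq_neg_one_of_neg h]; norm_num
    · rw [h]; simp
    · rw [Int.sign_eq_one_of_pos h]; norm_num
  have hstep_sum : ∑ p : T, step p = y := by
    funext jj
    rw [Finset.sum_apply]
    rw [← Finset.univ_sigma_univ, Finset.sum_sigma]
    have hinner : ∀ j : Fin n, ∑ i : Fin ((y j).natAbs), step ⟨j, i⟩ jj
        = if jj = j then ((y j).natAbs : ℤ) * Int.sign (y j) else 0 := by
      intro j
      have hval : ∀ i : Fin ((y j).natAbs),
          step ⟨j, i⟩ jj = if jj = j then Int.sign (y j) else 0 := by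
        intro i
        simp [hstep, Pi.single_apply]
      rw [Finset.sum_congr rfl fun i _ => hval i, Finset.sum_const, Finset.card_univ,
        Fintype.card_fin]
      split <;> simp [nsmul_eq_mul]
    rw [Finset.sum_congr rfl fun j _ => hinner j, Finset.sum_ite_eq]
    simp only [Finset.mem_univ, if_pos]
    rw [mul_comm, Int.sign_mul_natAbs]
  set vz : T → (Fin m → ℤ) := fun p => A.mulVec (step p) with hvz
  set vq : T → (Fin m → ℚ) := fun p i => ((vz p i : ℤ) : ℚ) with hvq
  have hvzval : ∀ p i, vz p i = A i p.1 * Int.sign (y p.1) := by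
    intro p i
    exact congrFun (Matrix.mulVec_single A p.1 (Int.sign (y p.1))) i
  have hvqb : ∀ p i, |vq p i| ≤ ((Δ' : ℤ) : ℚ) := by
    intro p i
    have h1 : |vz p i| ≤ Δ' := by
      rw [hvzval, abs_mul]
      calc |A i p.1| * |Int.sign (y p.1)| ≤ Δ' * 1 :=
        mul_le_mul (hA' i p.1) (hsignabs _) (abs_nonneg _) hΔ'0
      _ = Δ' := mul_one _
    show |((vz p i : ℤ) : ℚ)| ≤ ((Δ' : ℤ) : ℚ)
    exact_mod_cast h1
  have hsumvz : ∑ p : T, vz p = 0 := by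
    calc ∑ p : T, vz p = ∑ p : T, A.mulVecLin (step p) :=
          Finset.sum_congr rfl fun p _ => (Matrix.mulVecLin_apply A (step p)).symm
      _ = A.mulVecLin (∑ p : T, step p) := (map_sum (A.mulVecLin) _ _).symm
      _ = 0 := by rw [hstep_sum, Matrix.mulVecLin_apply, hyc]
  have hsumvq : ∑ p : T, vq p = 0 := by
    funext i
    rw [Finset.sum_apply]
    have h := congrFun hsumvz i
    rw [Finset.sum_apply] at h
    show ∑ p : T, ((vz p i : ℤ) : ℚ) = (0 : Fin m → ℚ) i
    rw [← Int.cast_sum, h]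
    simp
  obtain ⟨f, hinj, hpre⟩ :=
    steinitz vq ((Δ' : ℤ) : ℚ) (by exact_mod_cast hΔ'0) hvqb hsumvq N hcardT
  have hbij : Function.Bijective f := by
    rw [Fintype.bijective_iff_injective_and_card]
    exact ⟨hinj, by rw [Fintype.card_fin, hcardT]⟩
  set Pz : ℕ → Fin m → ℤ :=
    fun t i => ∑ j ∈ Finset.univ.filter (fun j : Fin N => (j : ℕ) < t), vz (f j) i with hPz
  have hPzabs : ∀ t i, |Pz t i| ≤ (m : ℤ) * Δ' := by
    intro t i
    have h1 := hpre t i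
    have h2 : ((Pz t i : ℤ) : ℚ)
        = ∑ j ∈ Finset.univ.filter (fun j : Fin N => (j : ℕ) < t), vq (f j) i := by
      show ((∑ j ∈ Finset.univ.filter (fun j : Fin N => (j : ℕ) < t), vz (f j) i : ℤ) : ℚ) = _
      push_cast
      rfl
    rw [← h2] at h1
    have h3 : |((Pz t i : ℤ) : ℚ)| ≤ (((m : ℤ) * Δ' : ℤ) : ℚ) := by
      push_cast
      push_cast at h1
      exact h1
    exact_mod_cast h3
  set box : Finset (Fin m → ℤ) :=
    Finset.Icc (fun _ => -((m:ℤ) * Δ')) (fun _ => (m:ℤ) * Δ') with hbox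
  have hboxcard : box.card = ((2 * (m:ℤ) * Δ' + 1).toNat)^m := by
    rw [hbox, Pi.card_Icc]
    simp only [Int.card_Icc]
    rw [Finset.prod_const, Finset.card_univ, Fintype.card_fin]
    have : (m:ℤ) * Δ' + 1 - -((m:ℤ) * Δ') = 2 * (m:ℤ) * Δ' + 1 := by ring
    rw [this]
  have hboxlt : box.card < N := by
    have h1 : ((2 * (m:ℤ) * Δ' + 1).toNat : ℤ) = 2 * (m:ℤ) * Δ' + 1 :=
      Int.toNat_of_nonneg (by positivity)
    have h2 : ((box.card : ℕ) : ℤ) < (N : ℤ) := by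
      rw [hboxcard]
      calc (((2 * (m:ℤ) * Δ' + 1).toNat ^ m : ℕ) : ℤ)
          = ((2 * (m:ℤ) * Δ' + 1).toNat : ℤ) ^ m := by push_cast; ring
        _ = (2 * (m:ℤ) * Δ' + 1) ^ m := by rw [h1]
        _ < N := hNbig
    exact_mod_cast h2
  have hmaps : ∀ j ∈ (Finset.univ : Finset (Fin N)),
      (fun i => Pz ((j : ℕ) + 1) i) ∈ box := by
    intro j _
    rw [hbox, Finset.mem_Icc]
    constructor <;> (intro i; have := abs_le.mp (hPzabs ((j : ℕ) + 1) i))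
    · exact this.1
    · exact this.2
  obtain ⟨j₁, -, j₂, -, hne, heq⟩ :=
    Finset.exists_ne_map_eq_of_card_lt_of_maps_to
      (by rw [Finset.card_univ, Fintype.card_fin]; exact hboxlt) hmaps
  -- key decomposition argument
  have key : ∀ (a b : Fin N), (a : ℕ) < (b : ℕ) →
      (fun i => Pz ((a : ℕ) + 1) i) = (fun i => Pz ((b : ℕ) + 1) i) → False := by
    intro a b hab hPeq
    set W : Finset (Fin N) :=
      Finset.univ.filter (fun j : Fin N => (a : ℕ) < (j : ℕ) ∧ (j : ℕ) ≤ (b : ℕ)) with hW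
    have hWsd : W = (Finset.univ.filter (fun j : Fin N => (j : ℕ) < (b : ℕ) + 1))
        \ (Finset.univ.filter (fun j : Fin N => (j : ℕ) < (a : ℕ) + 1)) := by
      ext j
      simp only [hW, Finset.mem_filter, Finset.mem_sdiff, Finset.mem_univ, true_and]
      omega
    have hWv : ∀ i, ∑ j ∈ W, vz (f j) i = 0 := by
      intro i
      have hsub : (Finset.univ.filter (fun j : Fin N => (j : ℕ) < (a : ℕ) + 1))
          ⊆ (Finset.univ.filter (fun j : Fin N => (j : ℕ) < (b : ℕ) + 1)) := by
        intro j hj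
        simp only [Finset.mem_filter, Finset.mem_univ, true_and] at *
        omega
      rw [hWsd, Finset.sum_sdiff_eq_sub hsub, sub_eq_zero]
      exact (congrFun hPeq i).symm
    set u : Fin n → ℤ := ∑ j ∈ W, step (f j) with hu
    have hcycu : IsCycle A u := by
      unfold IsCycle
      have h1 : A.mulVecLin u = ∑ j ∈ W, A.mulVecLin (step (f j)) := by
        rw [hu, map_sum]
      funext i
      rw [← Matrix.mulVecLin_apply, h1, Finset.sum_apply]
      have : ∀ j ∈ W, A.mulVecLin (step (f j)) i = vz (f j) i := fun j _ => rfl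
      rw [Finset.sum_congr rfl this, hWv i, Pi.zero_apply]
    have hcycv : IsCycle A (y - u) := by
      unfold IsCycle
      rw [Matrix.mulVec_sub, hyc, hcycu, sub_zero]
    -- counting
    have hScount : ∀ (S : Finset (Fin N)) (jj : Fin n),
        (∑ j ∈ S, step (f j)) jj
          = Int.sign (y jj) * ((S.filter (fun j => (f j).1 = jj)).card : ℤ) := by
      intro S jj
      rw [Finset.sum_apply]
      have h1 : ∀ j ∈ S, step (f j) jj = if (f j).1 = jj then Int.sign (y jj) else 0 := by
        intro j _
        simp only [hstep, Pi.single_apply]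
        by_cases h : (f j).1 = jj
        · rw [if_pos h, if_pos h.symm, h]
        · rw [if_neg h, if_neg (Ne.symm h)]
      rw [Finset.sum_congr rfl h1, ← Finset.sum_filter, Finset.sum_const, nsmul_eq_mul, mul_comm]
    have htoty : ∀ jj, y jj
        = Int.sign (y jj) * ((Finset.univ.filter (fun j : Fin N => (f j).1 = jj)).card : ℤ) := by
      intro jj
      have h1 : ∑ j : Fin N, step (f j) = ∑ p : T, step p :=
        Fintype.sum_bijective f hbij _ _ (fun j => rfl)
      rw [← hScount Finset.univ jj, h1, hstep_sum]
    have huval : ∀ jj, u jj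
        = Int.sign (y jj) * ((W.filter (fun j => (f j).1 = jj)).card : ℤ) :=
      fun jj => hScount W jj
    have hfib : ∀ (jj : Fin n) (j : Fin N), (f j).1 = jj → y jj ≠ 0 := by
      intro jj j h h0
      have hpos := (f j).2.pos
      rw [h, h0] at hpos
      simp at hpos
    have hcle : ∀ jj, (W.filter (fun j => (f j).1 = jj)).card
        ≤ (Finset.univ.filter (fun j : Fin N => (f j).1 = jj)).card :=
      fun jj => Finset.card_le_card (Finset.filter_subset_filter _ (Finset.subset_univ W))
    have hsumc : ∑ jj : Fin n, (W.filter (fun j => (f j).1 = jj)).card = W.card :=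
      (Finset.card_eq_sum_card_fiberwise (fun j _ => Finset.mem_univ ((f j).1))).symm
    have hsumtot : ∑ jj : Fin n,
        (Finset.univ.filter (fun j : Fin N => (f j).1 = jj)).card = N := by
      rw [← (Finset.card_eq_sum_card_fiberwise
        (fun (j : Fin N) (_ : j ∈ Finset.univ) => Finset.mem_univ ((f j).1)))]
      rw [Finset.card_univ, Fintype.card_fin]
    have hbW : b ∈ W := by
      simp only [hW, Finset.mem_filter, Finset.mem_univ, true_and]
      omega
    have hWpos : 0 < W.card := Finset.card_pos.mpr ⟨b, hbW⟩
    have hWlt : W.card < N := by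
      have hssub : W ⊂ Finset.univ := by
        rw [Finset.ssubset_univ_iff]
        intro hWu
        have : a ∈ W := hWu ▸ Finset.mem_univ a
        simp only [hW, Finset.mem_filter] at this
        omega
      have := Finset.card_lt_card hssub
      rwa [Finset.card_univ, Fintype.card_fin] at this
    -- u ≠ 0
    have hu0 : u ≠ 0 := by
      have hex : ∃ jj, (W.filter (fun j => (f j).1 = jj)).card ≠ 0 := by
        by_contra hall
        push_neg at hall
        have : ∑ jj : Fin n, (W.filter (fun j => (f j).1 = jj)).card = 0 :=
          Finset.sum_eq_zero fun jj _ => hall jj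
        omega
      obtain ⟨jj, hc⟩ := hex
      obtain ⟨j, hj⟩ := Finset.card_pos.mp (Nat.pos_of_ne_zero hc)
      have hj1 : (f j).1 = jj := (Finset.mem_filter.mp hj).2
      have hy0 : y jj ≠ 0 := hfib jj j hj1
      have hsgn : Int.sign (y jj) ≠ 0 := fun h => hy0 (Int.sign_eq_zero_iff_zero.mp h)
      intro h0
      have hz : u jj = 0 := by rw [h0]; rfl
      rw [huval jj] at hz
      have hcne : ((W.filter (fun j => (f j).1 = jj)).card : ℤ) ≠ 0 := by exact_mod_cast hc
      exact (mul_ne_zero hsgn hcne) hz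
    -- y - u ≠ 0
    have hv0 : y - u ≠ 0 := by
      have hex : ∃ jj, (W.filter (fun j => (f j).1 = jj)).card
          < (Finset.univ.filter (fun j : Fin N => (f j).1 = jj)).card := by
        by_contra hall
        push_neg at hall
        have : ∑ jj : Fin n, (Finset.univ.filter (fun j : Fin N => (f j).1 = jj)).card
            ≤ ∑ jj : Fin n, (W.filter (fun j => (f j).1 = jj)).card :=
          Finset.sum_le_sum fun jj _ => hall jj
        omega
      obtain ⟨jj, hlt⟩ := hex
      have htpos : 0 < (Finset.univ.filter (fun j : Fin N => (f j).1 = jj)).card := by omega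
      obtain ⟨j, hj⟩ := Finset.card_pos.mp htpos
      have hj1 : (f j).1 = jj := (Finset.mem_filter.mp hj).2
      have hy0 : y jj ≠ 0 := hfib jj j hj1
      have hsgn : Int.sign (y jj) ≠ 0 := fun h => hy0 (Int.sign_eq_zero_iff_zero.mp h)
      intro h0
      have h1 : y jj = u jj := by
        have := congrFun h0 jj
        rw [Pi.sub_apply, Pi.zero_apply, sub_eq_zero] at this
        exact this
      have h2 : Int.sign (y jj)
            * ((Finset.univ.filter (fun j : Fin N => (f j).1 = jj)).card : ℤ)
          = Int.sign (y jj) * ((W.filter (fun j => (f j).1 = jj)).card : ℤ) := by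
        rw [← htoty jj, ← huval jj]
        exact h1
      have h3 := mul_left_cancel₀ hsgn h2
      have hcc : (Finset.univ.filter (fun j : Fin N => (f j).1 = jj)).card
          = (W.filter (fun j => (f j).1 = jj)).card := by exact_mod_cast h3
      omega
    -- sign compatibility
    have hsc : SignCompat u (y - u) := by
      intro jj
      rw [Pi.sub_apply]
      have e1 := huval jj
      have e2 := htoty jj
      have e3 : y jj - u jj = Int.sign (y jj)
          * (((Finset.univ.filter (fun j : Fin N => (f j).1 = jj)).card : ℤ)
            - ((W.filter (fun j => (f j).1 = jj)).card : ℤ)) := by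
        linear_combination e2 - e1
      rw [e3, e1]
      have h1 : Int.sign (y jj) * ((W.filter (fun j => (f j).1 = jj)).card : ℤ)
            * (Int.sign (y jj)
              * (((Finset.univ.filter (fun j : Fin N => (f j).1 = jj)).card : ℤ)
                - ((W.filter (fun j => (f j).1 = jj)).card : ℤ)))
          = (Int.sign (y jj) * Int.sign (y jj))
            * (((W.filter (fun j => (f j).1 = jj)).card : ℤ)
              * (((Finset.univ.filter (fun j : Fin N => (f j).1 = jj)).card : ℤ)
                - ((W.filter (fun j => (f j).1 = jj)).card : ℤ))) := by ring
      rw [h1]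
      apply mul_nonneg (mul_self_nonneg _)
      apply mul_nonneg
      · exact Nat.cast_nonneg _
      · have hc12 : ((W.filter (fun j => (f j).1 = jj)).card : ℤ)
            ≤ ((Finset.univ.filter (fun j : Fin N => (f j).1 = jj)).card : ℤ) := by
          exact_mod_cast hcle jj
        linarith
    exact hind ⟨u, y - u, hcycu, hcycv, hu0, hv0, hsc, by abel⟩
  rcases Ne.lt_or_gt hne with h | h
  · exact key j₁ j₂ h heq
  · exact key j₂ j₁ h heq.symm
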